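/- Let f : ℤ → ℝ, let (∇ f)(x) = f(x) − f(x−1) be the backward difference operator, let α be a natural number and n a natural number. Then f(0) = ∑_{k=0}^{n} (−1)^k C(α, k) (∇^k f)(α) + (−1)^{n+1} ∑_{r=0}^{α−1} C(r, n) (∇^{n+1} f)(r+1) (the Bernoulli–Maclaurin formula of ∇-type with rest term of Cauchy type). -/

import Mathlib

open Finset

private theorem tele_aux (g : ℤ → ℝ) (α n : ℕ) :
    ∑ r ∈ range α, ((r.choose n : ℝ) * g ((r : ℤ) + 1)
        + (r.choose (n + 1) : ℝ) * (g ((r : ℤ) + 1) - g (r : ℤ)))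
      = (α.choose (n + 1) : ℝ) * g (α : ℤ) := by
  have h := Finset.sum_range_sub (fun r : ℕ => (r.choose (n + 1) : ℝ) * g (r : ℤ)) α
  have h2 : ∑ r ∈ range α, ((r.choose n : ℝ) * g ((r : ℤ) + 1)
        + (r.choose (n + 1) : ℝ) * (g ((r : ℤ) + 1) - g (r : ℤ)))
      = ∑ r ∈ range α, (((r + 1).choose (n + 1) : ℝ) * g (((r : ℕ) + 1 : ℕ) : ℤ)
        - (r.choose (n + 1) : ℝ) * g (r : ℤ)) := by
    apply Finset.sum_congr rfl
    intro r _
    rw [Nat.choose_succ_succ]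
    push_cast
    ring
  rw [h2]
  simpa using h

/-- Bernoulli–Maclaurin formula of ∇-type with rest term of Cauchy type:
for `f : ℤ → ℝ` and the backward difference `(∇ f)(x) = f(x) - f(x-1)`,
`f(0) = ∑_{k=0}^{n} (-1)^k C(α,k) (∇^k f)(α)
       + (-1)^{n+1} ∑_{r=0}^{α-1} C(r,n) (∇^{n+1} f)(r+1)`. -/
theorem nabla_bernoulli_maclaurin (f : ℤ → ℝ) (α n : ℕ) :
    f 0 = ∑ k ∈ Finset.range (n + 1),
        (-1 : ℝ) ^ k * (α.choose k : ℝ)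
          * ((fun (g : ℤ → ℝ) => fun y => g y - g (y - 1))^[k] f) (α : ℤ)
      + (-1 : ℝ) ^ (n + 1) * ∑ r ∈ Finset.range α,
          (r.choose n : ℝ)
            * ((fun (g : ℤ → ℝ) => fun y => g y - g (y - 1))^[n + 1] f) ((r : ℤ) + 1) := by
  induction n with
  | zero =>
    have h := Finset.sum_range_sub (fun r : ℕ => f (r : ℤ)) α
    simp only [Nat.cast_zero] at h
    have h2 : ∑ r ∈ Finset.range α, (f ((r : ℤ) + 1) - f ((r : ℤ) + 1 - 1))
        = f (α : ℤ) - f 0 := by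
      rw [← h]
      apply Finset.sum_congr rfl
      intro r _
      push_cast
      rw [add_sub_cancel_right]
    simp only [zero_add, Finset.sum_range_one, Function.iterate_zero, Function.iterate_one,
      id_eq, Nat.choose_zero_right, pow_zero, pow_one, one_mul, Nat.cast_one]
    show f 0 = f (α : ℤ) + (-1) * ∑ r ∈ Finset.range α,
        (f ((r : ℤ) + 1) - f ((r : ℤ) + 1 - 1))
    rw [h2]
    ring
  | succ n ih =>
    set D : (ℤ → ℝ) → ℤ → ℝ := fun g => fun y => g y - g (y - 1) with hD
    set g : ℤ → ℝ := D^[n + 1] f with hg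
    have hiter : D^[n + 2] f = D g := by
      rw [hg, ← Function.iterate_succ_apply' D (n + 1) f]
    rw [Finset.sum_range_succ, ih]
    have key : ∑ r ∈ Finset.range α, ((r.choose n : ℝ) * g ((r : ℤ) + 1)
          + (r.choose (n + 1) : ℝ) * (g ((r : ℤ) + 1) - g (r : ℤ)))
        = (α.choose (n + 1) : ℝ) * g (α : ℤ) := tele_aux g α n
    rw [Finset.sum_add_distrib] at key
    show _ + (-1 : ℝ) ^ (n + 1) * ∑ r ∈ Finset.range α, (r.choose n : ℝ) * g ((r : ℤ) + 1)
        = _ + (-1 : ℝ) ^ (n + 1) * (α.choose (n + 1) : ℝ) * g (α : ℤ)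
          + (-1 : ℝ) ^ (n + 2) * ∑ r ∈ Finset.range α,
              (r.choose (n + 1) : ℝ) * (D^[n + 2] f) ((r : ℤ) + 1)
    rw [hiter]
    have hDg : ∑ r ∈ Finset.range α, (r.choose (n + 1) : ℝ) * (D g) ((r : ℤ) + 1)
        = ∑ r ∈ Finset.range α, (r.choose (n + 1) : ℝ) * (g ((r : ℤ) + 1) - g (r : ℤ)) := by
      apply Finset.sum_congr rfl
      intro r _
      simp [hD]
    rw [hDg]
    linear_combination ((-1 : ℝ) ^ (n + 1)) * key
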